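/- Let X and Y be topological spaces, D_X ⊆ X and D_Y ⊆ Y closed discrete subsets, and φ : Y → X an injection such that φ[Y \ D_Y] = D_X and φ[Y] is dense in X. If D is a closed discrete subset of X and φ⁻¹[D] is a closed discrete subset of Y, then D is a closed discrete subset of the space ⟨X, σ(τ_X, τ_Y, φ)⟩. -/

import Mathlib

open Set Topology

/-- The topology σ(τ_X, τ_Y, φ): open sets of X whose φ-preimage is open in Y. -/
def sigmaTop {X : Type*} {Y : Type*} (tX : TopologicalSpace X) (tY : TopologicalSpace Y)
    (φ : Y → X) : TopologicalSpace X where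
  IsOpen U := tX.IsOpen U ∧ tY.IsOpen (φ ⁻¹' U)
  isOpen_univ := ⟨tX.isOpen_univ, by simpa using tY.isOpen_univ⟩
  isOpen_inter U V hU hV :=
    ⟨tX.isOpen_inter U V hU.1 hV.1, by
      rw [Set.preimage_inter]
      exact tY.isOpen_inter _ _ hU.2 hV.2⟩
  isOpen_sUnion s hs :=
    ⟨tX.isOpen_sUnion s fun U hU => (hs U hU).1, by
      rw [Set.preimage_sUnion]
      exact @isOpen_biUnion _ _ tY _ _ fun U hU => (hs U hU).2⟩

/-- A set is closed discrete: closed, and its subspace topology is discrete. -/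
def ClosedDiscrete {X : Type*} (t : TopologicalSpace X) (D : Set X) : Prop :=
  @IsClosed X t D ∧ @DiscreteTopology D (TopologicalSpace.induced (Subtype.val : D → X) t)

/-- Removing a point from a closed discrete set yields a closed set. -/
lemma CD_diff_singleton_closed {X : Type*} [t : TopologicalSpace X] {D : Set X}
    (h : ClosedDiscrete t D) (x : X) : IsClosed (D \ {x}) := by
  by_cases hx : x ∈ D
  · haveI : DiscreteTopology D := h.2
    have hcl : IsClosed ({(⟨x, hx⟩ : D)}ᶜ : Set D) := (isOpen_discrete _).isClosed_compl
    have h2 := h.1.isClosedEmbedding_subtypeVal.isClosedMap _ hcl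
    convert h2 using 1
    ext z
    constructor
    · rintro ⟨hzD, hzx⟩
      exact ⟨⟨z, hzD⟩, by simpa [Subtype.ext_iff] using hzx, rfl⟩
    · rintro ⟨⟨w, hw⟩, hwne, rfl⟩
      exact ⟨hw, by simpa [Subtype.ext_iff] using hwne⟩
  · rw [Set.diff_singleton_eq_self hx]
    exact h.1

theorem statement5 {X Y : Type*} (tX : TopologicalSpace X) (tY : TopologicalSpace Y)
    (DX : Set X) (DY : Set Y) (φ : Y → X)
    (hDX : ClosedDiscrete tX DX) (hDY : ClosedDiscrete tY DY)
    (hinj : Function.Injective φ)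
    (himg : φ '' DYᶜ = DX)
    (hdense : @Dense X tX (Set.range φ))
    (D : Set X) (hD : ClosedDiscrete tX D)
    (hpre : ClosedDiscrete tY (φ ⁻¹' D)) :
    ClosedDiscrete (sigmaTop tX tY φ) D := by
  constructor
  · -- closedness
    exact @IsClosed.mk X (sigmaTop tX tY φ) D ⟨hD.1.isOpen_compl, hpre.1.isOpen_compl⟩
  · -- discreteness
    refine (@discreteTopology_iff_isOpen_singleton D (TopologicalSpace.induced _ (sigmaTop tX tY φ))).mpr ?_
    rintro ⟨x, hx⟩
    rw [@isOpen_induced_iff]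
    -- the isolating open set
    have hXopen : tX.IsOpen (D \ {x})ᶜ := (CD_diff_singleton_closed hD x).isOpen_compl
    have hYclosed : @IsClosed Y tY (φ ⁻¹' (D \ {x})) := by
      by_cases hr : x ∈ Set.range φ
      · obtain ⟨y, rfl⟩ := hr
        have heq : φ ⁻¹' (D \ {φ y}) = (φ ⁻¹' D) \ {y} := by
          ext z
          simp only [Set.mem_preimage, Set.mem_diff, Set.mem_singleton_iff]
          exact and_congr_right fun _ => not_congr ⟨fun h => hinj h, fun h => by rw [h]⟩
        rw [heq]
        exact CD_diff_singleton_closed hpre y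
      · have heq : φ ⁻¹' (D \ {x}) = φ ⁻¹' D := by
          ext z
          simp only [Set.mem_preimage, Set.mem_diff, Set.mem_singleton_iff]
          exact ⟨fun h => h.1, fun h => ⟨h, fun hzx => hr ⟨z, hzx⟩⟩⟩
        rw [heq]
        exact hpre.1
    refine ⟨(D \ {x})ᶜ, ⟨hXopen, ?_⟩, ?_⟩
    · rw [Set.preimage_compl]
      exact hYclosed.isOpen_compl
    · ext ⟨z, hz⟩
      simp only [Set.mem_preimage, Set.mem_compl_iff, Set.mem_diff, Set.mem_singleton_iff,
        Set.mem_singleton_iff, Subtype.mk.injEq]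
      tauto
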